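/- Let k > 2^n + 1 and w : Fin k → ℕ with w_1 = w_2 = ⋯ = w_{2^n} (common value v > 0). Suppose the number of partitions of {2^n+1, …, k} into sets B and R with (∑_{i∈B} w_i) − (∑_{i∈R} w_i) = v·2^n is odd. Then the total number of balanced 2-colorings of all k indices (colorings where both color classes have equal total weight) is congruent to 2 mod 4. -/

import Mathlib

open Finset

lemma aux_odd_choose (n j : ℕ) (hj : j < 2 ^ n) : Odd ((2 ^ n - 1).choose j) := by
  have hp : Fact (Nat.Prime 2) := ⟨Nat.prime_two⟩
  have h := Choose.lucas_theorem_nat (p := 2) (a := n)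
    (Nat.sub_lt (by positivity) one_pos) hj
  have hdiv : ∀ i < n, (2 ^ n - 1) / 2 ^ i % 2 = 1 := by
    intro i hi
    have he : 2 ^ i * (2 ^ (n - i) - 1) + (2 ^ i - 1) = 2 ^ n - 1 := by
      have hms := Nat.mul_sub (2 ^ i) (2 ^ (n - i)) 1
      have hpow : 2 ^ i * 2 ^ (n - i) = 2 ^ n := by
        rw [← pow_add]; congr 1; omega
      have h2 : (1:ℕ) ≤ 2 ^ i := Nat.one_le_two_pow
      have h3 : (2:ℕ) ^ i ≤ 2 ^ n := Nat.pow_le_pow_right (by norm_num) hi.le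
      omega
    have h1 : (2 ^ n - 1) / 2 ^ i = 2 ^ (n - i) - 1 := by
      rw [← he, Nat.mul_add_div (by positivity),
        Nat.div_eq_of_lt (by have : (1:ℕ) ≤ 2 ^ i := Nat.one_le_two_pow; omega)]
      omega
    rw [h1]
    have h5 : (2:ℕ) ^ (n - i) = 2 * 2 ^ (n - i - 1) := by
      rw [← pow_succ']; congr 1; omega
    have h4 : (1:ℕ) ≤ 2 ^ (n - i - 1) := Nat.one_le_two_pow
    omega
  have hprod : ∏ i ∈ Finset.range n, ((2 ^ n - 1) / 2 ^ i % 2).choose (j / 2 ^ i % 2) = 1 := by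
    apply Finset.prod_eq_one
    intro i hi
    rw [hdiv i (Finset.mem_range.mp hi)]
    have : j / 2 ^ i % 2 < 2 := Nat.mod_lt _ (by norm_num)
    interval_cases (j / 2 ^ i % 2) <;> rfl
  rw [hprod] at h
  rw [Nat.odd_iff]
  simpa [Nat.ModEq] using h

lemma aux_central (n : ℕ) (hn : 1 ≤ n) : (2 ^ n).choose (2 ^ (n - 1)) % 4 = 2 := by
  have key := Nat.add_one_mul_choose_eq (2 ^ n - 1) (2 ^ (n - 1) - 1)
  have h1 : (2:ℕ) ^ n - 1 + 1 = 2 ^ n := by have : (1:ℕ) ≤ 2 ^ n := Nat.one_le_two_pow; omega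
  have h2 : (2:ℕ) ^ (n - 1) - 1 + 1 = 2 ^ (n - 1) := by
    have : (1:ℕ) ≤ 2 ^ (n-1) := Nat.one_le_two_pow; omega
  rw [h1, h2] at key
  have hpow : (2:ℕ) ^ n = 2 * 2 ^ (n - 1) := by rw [← pow_succ']; congr 1; omega
  have hC : (2 ^ n).choose (2 ^ (n - 1)) = 2 * (2 ^ n - 1).choose (2 ^ (n - 1) - 1) := by
    have hpos : (0:ℕ) < 2 ^ (n - 1) := by positivity
    apply Nat.eq_of_mul_eq_mul_right hpos
    calc (2 ^ n).choose (2 ^ (n-1)) * 2 ^ (n-1)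
        = 2 ^ n * (2 ^ n - 1).choose (2 ^ (n-1) - 1) := key.symm
      _ = 2 * (2 ^ n - 1).choose (2 ^ (n-1) - 1) * 2 ^ (n-1) := by rw [hpow]; ring
  obtain ⟨t, ht⟩ := aux_odd_choose n (2 ^ (n-1) - 1) (by
    have : (0:ℕ) < 2 ^ (n-1) := by positivity
    have : (2:ℕ) ^ (n-1) ≤ 2 ^ n := Nat.pow_le_pow_right (by norm_num) (by omega)
    omega)
  omega

lemma aux_four_dvd (n j : ℕ) (h1 : 0 < j) (h2 : j < 2 ^ n) (h3 : j ≠ 2 ^ (n - 1)) :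
    4 ∣ (2 ^ n).choose j := by
  set a := j.factorization 2 with ha
  set m := j / 2 ^ a with hm
  have hjm : 2 ^ a * m = j := Nat.ordProj_mul_ordCompl_eq_self j 2
  have hmodd : ¬ 2 ∣ m := Nat.not_dvd_ordCompl Nat.prime_two h1.ne'
  have haj : 2 ^ a ≤ j := Nat.ordProj_le 2 h1.ne'
  clear_value m
  have hapow : a < n := by
    by_contra hc
    push_neg at hc
    have : (2:ℕ) ^ n ≤ 2 ^ a := Nat.pow_le_pow_right (by norm_num) hc
    omega
  have hane : a ≠ n - 1 := by
    intro haeq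
    apply h3
    have hpow2 : (2:ℕ) ^ n = 2 ^ a * 2 := by
      rw [← pow_succ]; congr 1; omega
    have hm2 : m < 2 := by
      by_contra hc
      push_neg at hc
      have : 2 ^ a * 2 ≤ 2 ^ a * m := Nat.mul_le_mul le_rfl hc
      omega
    have hm1 : m = 1 := by omega
    rw [← haeq, ← hjm, hm1, mul_one]
  have key := Nat.add_one_mul_choose_eq (2 ^ n - 1) (j - 1)
  have h1' : (2:ℕ) ^ n - 1 + 1 = 2 ^ n := by have : (1:ℕ) ≤ 2 ^ n := Nat.one_le_two_pow; omega
  rw [h1', Nat.sub_add_cancel h1] at key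
  set C := (2 ^ n).choose j with hCdef
  have hdvd : 2 ^ a * 2 ^ (n - a) ∣ 2 ^ a * (C * m) := by
    have hfact : (2:ℕ) ^ n = 2 ^ a * 2 ^ (n - a) := by rw [← pow_add]; congr 1; omega
    calc 2 ^ a * 2 ^ (n - a) = 2 ^ n := hfact.symm
      _ ∣ C * j := ⟨_, key.symm⟩
      _ = 2 ^ a * (C * m) := by rw [← hjm]; ring
  have hdvd2 : 2 ^ (n - a) ∣ C * m :=
    (Nat.mul_dvd_mul_iff_left (by positivity : (0:ℕ) < 2 ^ a)).mp hdvd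
  have hcop : Nat.Coprime (2 ^ (n - a)) m :=
    Nat.Coprime.pow_left _ (Nat.coprime_two_left.mpr (Nat.odd_iff.mpr (by omega)))
  have hfin := hcop.dvd_of_dvd_mul_right hdvd2
  calc (4:ℕ) = 2 ^ 2 := by norm_num
    _ ∣ 2 ^ (n - a) := pow_dvd_pow 2 (by omega)
    _ ∣ C := hfin


lemma aux_even {α : Type*} [DecidableEq α] (t : Finset α) (x0 : α) (hx0 : x0 ∈ t)
    (p : Finset α → Prop) [DecidablePred p] (f : α → ℤ)
    (hp : ∀ B, B ⊆ t → (p B ↔ ∑ i ∈ B, f i = ∑ i ∈ t \ B, f i)) :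
    Even ((t.powerset.filter p).card) := by
  classical
  have hsplit := Finset.card_filter_add_card_filter_not
    (s := t.powerset.filter p) (p := fun B => x0 ∈ B)
  have hbij : ((t.powerset.filter p).filter (fun B => x0 ∈ B)).card
      = ((t.powerset.filter p).filter (fun B => ¬ x0 ∈ B)).card := by
    refine Finset.card_bij' (fun B _ => t \ B) (fun B _ => t \ B) ?_ ?_ ?_ ?_
    · intro B hB
      simp only [Finset.mem_filter, Finset.mem_powerset] at hB ⊢
      obtain ⟨⟨hBt, hpB⟩, hx⟩ := hB
      refine ⟨⟨Finset.sdiff_subset, ?_⟩, ?_⟩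
      · rw [hp _ Finset.sdiff_subset, Finset.sdiff_sdiff_eq_self hBt]
        exact ((hp B hBt).mp hpB).symm
      · simp [Finset.mem_sdiff, hx]
    · intro B hB
      simp only [Finset.mem_filter, Finset.mem_powerset] at hB ⊢
      obtain ⟨⟨hBt, hpB⟩, hx⟩ := hB
      refine ⟨⟨Finset.sdiff_subset, ?_⟩, ?_⟩
      · rw [hp _ Finset.sdiff_subset, Finset.sdiff_sdiff_eq_self hBt]
        exact ((hp B hBt).mp hpB).symm
      · simp [Finset.mem_sdiff, hx0, hx]
    · intro B hB
      simp only [Finset.mem_filter, Finset.mem_powerset] at hB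
      exact Finset.sdiff_sdiff_eq_self hB.1.1
    · intro B hB
      simp only [Finset.mem_filter, Finset.mem_powerset] at hB
      exact Finset.sdiff_sdiff_eq_self hB.1.1
  exact ⟨((t.powerset.filter p).filter (fun B => x0 ∈ B)).card, by omega⟩

theorem stmt_11 (n k : ℕ) (hk : 2 ^ n + 1 < k) (w : Fin k → ℕ) (v : ℕ) (hv : 0 < v)
    (hw : ∀ i : Fin k, (i : ℕ) < 2 ^ n → w i = v)
    (tail : Finset (Fin k)) (htail : tail = Finset.univ.filter (fun i : Fin k => 2 ^ n ≤ (i : ℕ)))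
    (hodd : Odd ((tail.powerset.filter (fun B : Finset (Fin k) =>
      (∑ i ∈ B, (w i : ℤ)) - ∑ i ∈ tail \ B, (w i : ℤ) = (v : ℤ) * 2 ^ n)).card)) :
    (Finset.univ.filter (fun c : Fin k → Bool =>
      ∑ i ∈ Finset.univ.filter (fun i => c i = true), w i =
      ∑ i ∈ Finset.univ.filter (fun i => c i = false), w i)).card % 4 = 2 := by
  classical
  have hk2 : 2 ^ n < k := by omega
  set head : Finset (Fin k) := Finset.univ.filter (fun i : Fin k => (i : ℕ) < 2 ^ n) with hhead
  have hmem_head : ∀ i : Fin k, i ∈ head ↔ (i : ℕ) < 2 ^ n := by intro i; simp [hhead]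
  have hmem_tail : ∀ i : Fin k, i ∈ tail ↔ 2 ^ n ≤ (i : ℕ) := by intro i; simp [htail]
  clear_value head
  have hheadcard : head.card = 2 ^ n := by
    have h1 : head.card = (Finset.range (2 ^ n)).card := by
      exact Finset.card_bij' (fun (i : Fin k) _ => (i : ℕ))
        (fun a ha => (⟨a, lt_trans (Finset.mem_range.mp ha) hk2⟩ : Fin k))
        (fun a ha => Finset.mem_range.mpr ((hmem_head a).mp ha))
        (fun a ha => (hmem_head _).mpr (Finset.mem_range.mp ha))
        (fun a ha => Fin.ext rfl)
        (fun a ha => rfl)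
    rw [h1, Finset.card_range]
  have hdisj : Disjoint head tail := by
    rw [Finset.disjoint_left]
    intro i hi hit
    have h1 := (hmem_head i).mp hi
    have h2 := (hmem_tail i).mp hit
    omega
  have hunion : head ∪ tail = Finset.univ := by
    ext i
    simp only [Finset.mem_union, Finset.mem_univ, iff_true]
    by_cases hi : (i : ℕ) < 2 ^ n
    · exact Or.inl ((hmem_head i).mpr hi)
    · exact Or.inr ((hmem_tail i).mpr (by omega))
  have hsum_head : ∀ A : Finset (Fin k), A ⊆ head → ∑ i ∈ A, w i = A.card * v := by
    intro A hA
    rw [Finset.sum_congr rfl (fun i hi => hw i ((hmem_head i).mp (hA hi))),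
      Finset.sum_const, smul_eq_mul]
  have hcompl : ∀ A B : Finset (Fin k), A ⊆ head → B ⊆ tail →
      Finset.univ \ (A ∪ B) = (head \ A) ∪ (tail \ B) := by
    intro A B hA hB
    ext i
    by_cases hi : (i : ℕ) < 2 ^ n
    · have h1 : i ∈ head := (hmem_head i).mpr hi
      have h2 : i ∉ tail := fun h => by have := (hmem_tail i).mp h; omega
      have h3 : i ∉ B := fun h => h2 (hB h)
      simp [h1, h2, h3]
    · have h1 : i ∉ head := fun h => hi ((hmem_head i).mp h)
      have h2 : i ∈ tail := (hmem_tail i).mpr (by omega)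
      have h3 : i ∉ A := fun h => h1 (hA h)
      simp [h1, h2, h3]
  have hkey : ∀ A B : Finset (Fin k), A ⊆ head → B ⊆ tail →
      ((∑ i ∈ A ∪ B, w i = ∑ i ∈ Finset.univ \ (A ∪ B), w i) ↔
        (∑ i ∈ B, (w i : ℤ)) - ∑ i ∈ tail \ B, (w i : ℤ) =
          (v : ℤ) * (2 ^ n - 2 * (A.card : ℤ))) := by
    intro A B hA hB
    have hdAB : Disjoint A B := hdisj.mono hA hB
    have hdAB' : Disjoint (head \ A) (tail \ B) :=
      hdisj.mono Finset.sdiff_subset Finset.sdiff_subset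
    have hAle : A.card ≤ 2 ^ n := by rw [← hheadcard]; exact Finset.card_le_card hA
    rw [hcompl A B hA hB, Finset.sum_union hdAB, Finset.sum_union hdAB',
      hsum_head A hA, hsum_head (head \ A) Finset.sdiff_subset,
      Finset.card_sdiff_of_subset hA, hheadcard]
    constructor
    · intro h
      have h' : ((A.card * v + ∑ i ∈ B, w i : ℕ) : ℤ) =
          (((2 ^ n - A.card) * v + ∑ i ∈ tail \ B, w i : ℕ) : ℤ) := by exact_mod_cast h
      push_cast [Nat.cast_sub hAle] at h'
      linarith
    · intro h
      have h' : ((A.card * v + ∑ i ∈ B, w i : ℕ) : ℤ) =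
          (((2 ^ n - A.card) * v + ∑ i ∈ tail \ B, w i : ℕ) : ℤ) := by
        push_cast [Nat.cast_sub hAle]
        linarith
      exact_mod_cast h'
  -- Step A: colorings to subsets
  have hfalse_filter : ∀ c : Fin k → Bool,
      Finset.univ.filter (fun i => c i = false) =
        Finset.univ \ Finset.univ.filter (fun i => c i = true) := by
    intro c; ext i; cases h : c i <;> simp [h]
  have hstepA : (Finset.univ.filter (fun c : Fin k → Bool =>
      ∑ i ∈ Finset.univ.filter (fun i => c i = true), w i =
      ∑ i ∈ Finset.univ.filter (fun i => c i = false), w i)).card =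
      (Finset.univ.powerset.filter (fun S : Finset (Fin k) =>
        ∑ i ∈ S, w i = ∑ i ∈ Finset.univ \ S, w i)).card := by
    refine Finset.card_bij' (fun c _ => Finset.univ.filter (fun i => c i = true))
      (fun S _ => fun i => decide (i ∈ S)) ?_ ?_ ?_ ?_
    · intro c hc
      rw [Finset.mem_filter] at hc ⊢
      refine ⟨Finset.mem_powerset.mpr (Finset.filter_subset _ _), ?_⟩
      rw [← hfalse_filter c]
      exact hc.2
    · intro S hS
      rw [Finset.mem_filter] at hS ⊢
      refine ⟨Finset.mem_univ _, ?_⟩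
      have h1 : Finset.univ.filter (fun i => decide (i ∈ S) = true) = S := by
        ext i; simp
      have h2 : Finset.univ.filter (fun i => decide (i ∈ S) = false) = Finset.univ \ S := by
        ext i; simp
      rw [h1, h2]
      exact hS.2
    · intro c hc
      funext i
      by_cases h : c i = true <;> simp [h]
    · intro S hS
      ext i; simp
  -- Step B: subsets to pairs
  have hsplit1 : ∀ A B : Finset (Fin k), A ⊆ head → B ⊆ tail → (A ∪ B) ∩ head = A := by
    intro A B hA hB; ext i
    simp only [Finset.mem_inter, Finset.mem_union]
    constructor
    · rintro ⟨h1 | h1, h2⟩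
      · exact h1
      · exact absurd h2 (Finset.disjoint_right.mp hdisj (hB h1))
    · intro h; exact ⟨Or.inl h, hA h⟩
  have hsplit2 : ∀ A B : Finset (Fin k), A ⊆ head → B ⊆ tail → (A ∪ B) ∩ tail = B := by
    intro A B hA hB; ext i
    simp only [Finset.mem_inter, Finset.mem_union]
    constructor
    · rintro ⟨h1 | h1, h2⟩
      · exact absurd h2 (Finset.disjoint_left.mp hdisj (hA h1))
      · exact h1
    · intro h; exact ⟨Or.inr h, hB h⟩
  have hrec : ∀ S : Finset (Fin k), (S ∩ head) ∪ (S ∩ tail) = S := by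
    intro S
    rw [← Finset.inter_union_distrib_left, hunion, Finset.inter_univ]
  have hstepB : (Finset.univ.powerset.filter (fun S : Finset (Fin k) =>
        ∑ i ∈ S, w i = ∑ i ∈ Finset.univ \ S, w i)).card =
      ((head.powerset ×ˢ tail.powerset).filter
        (fun p : Finset (Fin k) × Finset (Fin k) =>
          (∑ i ∈ p.2, (w i : ℤ)) - ∑ i ∈ tail \ p.2, (w i : ℤ) =
            (v : ℤ) * (2 ^ n - 2 * (p.1.card : ℤ)))).card := by
    refine Finset.card_bij' (fun S _ => (S ∩ head, S ∩ tail)) (fun p _ => p.1 ∪ p.2) ?_ ?_ ?_ ?_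
    · intro S hS
      rw [Finset.mem_filter] at hS ⊢
      refine ⟨Finset.mem_product.mpr ⟨Finset.mem_powerset.mpr Finset.inter_subset_right,
        Finset.mem_powerset.mpr Finset.inter_subset_right⟩, ?_⟩
      have h2 := hkey (S ∩ head) (S ∩ tail) Finset.inter_subset_right Finset.inter_subset_right
      rw [hrec S] at h2
      exact h2.mp hS.2
    · intro p hp
      rw [Finset.mem_filter, Finset.mem_product, Finset.mem_powerset, Finset.mem_powerset] at hp
      rw [Finset.mem_filter]
      refine ⟨Finset.mem_powerset.mpr (Finset.subset_univ _), ?_⟩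
      exact (hkey p.1 p.2 hp.1.1 hp.1.2).mpr hp.2
    · intro S hS
      exact hrec S
    · intro p hp
      rw [Finset.mem_filter, Finset.mem_product, Finset.mem_powerset, Finset.mem_powerset] at hp
      exact Prod.ext (hsplit1 p.1 p.2 hp.1.1 hp.1.2) (hsplit2 p.1 p.2 hp.1.1 hp.1.2)
  -- Step C: pairs to sum over head subsets
  set N : ℕ → ℕ := fun h => (tail.powerset.filter (fun B : Finset (Fin k) =>
      (∑ i ∈ B, (w i : ℤ)) - ∑ i ∈ tail \ B, (w i : ℤ) =
        (v : ℤ) * (2 ^ n - 2 * (h : ℤ)))).card with hNdef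
  clear_value N
  have hstepC : ((head.powerset ×ˢ tail.powerset).filter
        (fun p : Finset (Fin k) × Finset (Fin k) =>
          (∑ i ∈ p.2, (w i : ℤ)) - ∑ i ∈ tail \ p.2, (w i : ℤ) =
            (v : ℤ) * (2 ^ n - 2 * (p.1.card : ℤ)))).card =
      ∑ A ∈ head.powerset, N A.card := by
    rw [Finset.card_filter, Finset.sum_product]
    refine Finset.sum_congr rfl fun A hA => ?_
    simp only [hNdef, Finset.card_filter]
  -- Step D: group by cardinality
  have hstepD : ∑ A ∈ head.powerset, N A.card =
      ∑ j ∈ Finset.range (2 ^ n + 1), (2 ^ n).choose j * N j := by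
    rw [Finset.sum_powerset, hheadcard]
    refine Finset.sum_congr rfl fun j hj => ?_
    rw [Finset.sum_congr rfl (fun t ht => by
        rw [(Finset.mem_powersetCard.mp ht).2]),
      Finset.sum_const, Finset.card_powersetCard, hheadcard, smul_eq_mul]
  -- identifications
  have hN0 : N 0 = (tail.powerset.filter (fun B : Finset (Fin k) =>
      (∑ i ∈ B, (w i : ℤ)) - ∑ i ∈ tail \ B, (w i : ℤ) = (v : ℤ) * 2 ^ n)).card := by
    simp only [hNdef]
    congr 1
  have hoddN0 : Odd (N 0) := by rw [hN0]; exact hodd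
  have hNtop : N (2 ^ n) = N 0 := by
    simp only [hNdef]
    refine Finset.card_bij' (fun B _ => tail \ B) (fun B _ => tail \ B) ?_ ?_ ?_ ?_
    · intro B hB
      simp only [Finset.mem_filter, Finset.mem_powerset] at hB ⊢
      refine ⟨Finset.sdiff_subset, ?_⟩
      rw [Finset.sdiff_sdiff_eq_self hB.1]
      have h2 := hB.2
      push_cast at h2 ⊢
      linarith
    · intro B hB
      simp only [Finset.mem_filter, Finset.mem_powerset] at hB ⊢
      refine ⟨Finset.sdiff_subset, ?_⟩
      rw [Finset.sdiff_sdiff_eq_self hB.1]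
      have h2 := hB.2
      push_cast at h2 ⊢
      linarith
    · intro B hB
      simp only [Finset.mem_filter, Finset.mem_powerset] at hB
      exact Finset.sdiff_sdiff_eq_self hB.1
    · intro B hB
      simp only [Finset.mem_filter, Finset.mem_powerset] at hB
      exact Finset.sdiff_sdiff_eq_self hB.1
  have hx0 : (⟨2 ^ n, hk2⟩ : Fin k) ∈ tail := (hmem_tail _).mpr (le_refl _)
  have hNmid : ∀ j : ℕ, 2 * j = 2 ^ n → Even (N j) := by
    intro j hj
    have h2 : (v : ℤ) * (2 ^ n - 2 * (j : ℤ)) = 0 := by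
      have hcast : ((2:ℤ) ^ n) = 2 * (j : ℤ) := by exact_mod_cast hj.symm
      rw [hcast]; ring
    simp only [hNdef]
    exact aux_even tail ⟨2 ^ n, hk2⟩ hx0 _ (fun i => (w i : ℤ))
      (fun B hB => by rw [h2]; exact sub_eq_zero)
  -- final computation
  rw [hstepA, hstepB, hstepC, hstepD]
  clear hstepA hstepB hstepC hstepD hN0 hkey hcompl hsum_head hfalse_filter hsplit1 hsplit2
    hrec hodd hNdef hmem_head hmem_tail hheadcard hdisj hunion hw hx0 htail hhead
  clear hv hk w tail head v
  obtain ⟨a, ha⟩ := hoddN0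
  rcases Nat.eq_zero_or_pos n with hn | hn
  · subst hn
    rw [show (2:ℕ) ^ 0 = 1 from rfl] at hNtop ⊢
    rw [Finset.sum_range_succ, Finset.sum_range_succ, Finset.sum_range_zero,
      Nat.choose_zero_right, Nat.choose_self, hNtop]
    omega
  · have hmid2 : 2 * 2 ^ (n - 1) = 2 ^ n := by rw [← pow_succ']; congr 1; omega
    obtain ⟨b, hb⟩ := hNmid (2 ^ (n - 1)) hmid2
    have hmidpos : 0 < 2 ^ (n - 1) := by positivity
    have htoppos : 0 < 2 ^ n := by positivity
    have hmidlt : 2 ^ (n - 1) < 2 ^ n := by omega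
    have hzmod : ((∑ j ∈ Finset.range (2 ^ n + 1), (2 ^ n).choose j * N j : ℕ) : ZMod 4)
        = ((2 : ℕ) : ZMod 4) := by
      have hsub : ({0, 2 ^ (n - 1), 2 ^ n} : Finset ℕ) ⊆ Finset.range (2 ^ n + 1) := by
        intro x hx
        simp only [Finset.mem_insert, Finset.mem_singleton] at hx
        rcases hx with h|h|h <;> (rw [Finset.mem_range]; omega)
      push_cast
      rw [← Finset.sum_subset hsub]
      · rw [Finset.sum_insert (by
            simp only [Finset.mem_insert, Finset.mem_singleton]
            push_neg
            exact ⟨by omega, by omega⟩),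
          Finset.sum_insert (by
            simp only [Finset.mem_singleton]
            omega),
          Finset.sum_singleton]
        rw [Nat.choose_zero_right, Nat.choose_self, hNtop]
        have hcmid : (((2 ^ n).choose (2 ^ (n - 1)) : ℕ) : ZMod 4) = 2 := by
          rw [← ZMod.natCast_mod, aux_central n hn]
          norm_num
        rw [hcmid, ha, hb]
        push_cast
        have h4 : (4 : ZMod 4) = 0 := by decide
        linear_combination ((a : ZMod 4) + (b : ZMod 4)) * h4
      · intro x hx hnx
        simp only [Finset.mem_insert, Finset.mem_singleton, not_or] at hnx
        have hxr := Finset.mem_range.mp hx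
        have hdvd := aux_four_dvd n x (by omega) (by omega) hnx.2.1
        rw [(ZMod.natCast_eq_zero_iff _ _).mpr hdvd, zero_mul]
    have hmod := (ZMod.natCast_eq_natCast_iff _ _ _).mp hzmod
    have : (∑ j ∈ Finset.range (2 ^ n + 1), (2 ^ n).choose j * N j) % 4 = 2 % 4 := hmod
    omega
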